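/- Let n > 2 and let A be an n×n real symmetric matrix with zero diagonal, and let Ã be its U-centered matrix. Then Ã is invariant under double centering: if B is the matrix obtained by double centering Ã, i.e. B_{ij} = Ã_{ij} − (1/n)Σ_{ℓ} Ã_{iℓ} − (1/n)Σ_{k} Ã_{kj} + (1/n²)Σ_{k,ℓ} Ã_{kℓ}, then B = Ã. -/

import Mathlib

/-- The U-centered matrix of an `n × n` real matrix `A`. -/
noncomputable def Ucenter {n : ℕ} (A : Matrix (Fin n) (Fin n) ℝ) :
    Matrix (Fin n) (Fin n) ℝ :=
  Matrix.of fun i j =>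
    if i = j then 0
    else A i j - (∑ l, A i l) / ((n : ℝ) - 2) - (∑ k, A k j) / ((n : ℝ) - 2)
      + (∑ k, ∑ l, A k l) / (((n : ℝ) - 1) * ((n : ℝ) - 2))

lemma Ucenter_row_sum {n : ℕ} (hn : 2 < n)
    (A : Matrix (Fin n) (Fin n) ℝ) (hsymm : A.IsSymm)
    (hdiag : ∀ i, A i i = 0) (i : Fin n) :
    ∑ l, Ucenter A i l = 0 := by
  have hn2 : (2:ℝ) < (n:ℝ) := by exact_mod_cast hn
  have h2 : (n:ℝ) - 2 ≠ 0 := by linarith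
  have h1 : (n:ℝ) - 1 ≠ 0 := by linarith
  have hcol : (∑ k, A k i) = ∑ l, A i l := by
    apply Finset.sum_congr rfl
    intro k _
    exact hsymm.apply i k ▸ rfl
  have hsplit := Finset.sum_erase_add Finset.univ (fun l => Ucenter A i l)
    (Finset.mem_univ i)
  have hii : Ucenter A i i = 0 := by simp [Ucenter]
  rw [hii, add_zero] at hsplit
  rw [← hsplit]
  have hcard : ((Finset.univ.erase i).card : ℝ) = (n:ℝ) - 1 := by
    rw [Finset.card_erase_of_mem (Finset.mem_univ i)]
    simp
    have : 1 ≤ n := by omega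
    push_cast [Nat.cast_sub this]
    ring
  have hval : ∀ l ∈ Finset.univ.erase i, Ucenter A i l =
      A i l - (∑ l', A i l') / ((n : ℝ) - 2) - (∑ k, A k l) / ((n : ℝ) - 2)
      + (∑ k, ∑ l', A k l') / (((n : ℝ) - 1) * ((n : ℝ) - 2)) := by
    intro l hl
    have : i ≠ l := fun h => (Finset.mem_erase.mp hl).1 h.symm
    simp [Ucenter, this]
  rw [Finset.sum_congr rfl hval]
  have hA : ∑ l ∈ Finset.univ.erase i, A i l = ∑ l, A i l := by
    rw [← Finset.sum_erase_add Finset.univ _ (Finset.mem_univ i), hdiag, add_zero]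
  have hC : ∑ l ∈ Finset.univ.erase i, ((∑ k, A k l) / ((n:ℝ) - 2))
      = ((∑ k, ∑ l', A k l') - (∑ l, A i l)) / ((n:ℝ) - 2) := by
    rw [← Finset.sum_div]
    congr 1
    have : ∑ l ∈ Finset.univ.erase i, (∑ k, A k l)
        = (∑ l, ∑ k, A k l) - (∑ k, A k i) := by
      rw [← Finset.sum_erase_add Finset.univ (fun l => ∑ k, A k l) (Finset.mem_univ i)]
      ring
    rw [this, hcol, Finset.sum_comm]
  simp only [Finset.sum_add_distrib, Finset.sum_sub_distrib, hA, hC,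
    Finset.sum_const, nsmul_eq_mul, hcard]
  field_simp
  ring

lemma Ucenter_col_sum {n : ℕ} (hn : 2 < n)
    (A : Matrix (Fin n) (Fin n) ℝ) (hsymm : A.IsSymm)
    (hdiag : ∀ i, A i i = 0) (j : Fin n) :
    ∑ k, Ucenter A k j = 0 := by
  have hsym : ∀ k, Ucenter A k j = Ucenter A j k := by
    intro k
    by_cases h : k = j
    · subst h; rfl
    · have h' : j ≠ k := fun hh => h hh.symm
      simp only [Ucenter, Matrix.of_apply, if_neg h, if_neg h']
      rw [hsymm.apply j k]
      have : (∑ l, A k l) = ∑ k', A k' k := by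
        exact Finset.sum_congr rfl fun l _ => (hsymm.apply k l).symm
      rw [this]
      have : (∑ k', A k' j) = ∑ l, A j l := by
        exact Finset.sum_congr rfl fun l _ => hsymm.apply j l
      rw [this]
      ring
  rw [Finset.sum_congr rfl fun k _ => hsym k]
  exact Ucenter_row_sum hn A hsymm hdiag j

/-- A U-centered matrix is invariant under double centering. -/
theorem Ucenter_doubleCenter_invariant {n : ℕ} (hn : 2 < n)
    (A : Matrix (Fin n) (Fin n) ℝ) (hsymm : A.IsSymm)
    (hdiag : ∀ i, A i i = 0)
    (B : Matrix (Fin n) (Fin n) ℝ)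
    (hB : ∀ i j, B i j = Ucenter A i j - (∑ l, Ucenter A i l) / (n : ℝ)
      - (∑ k, Ucenter A k j) / (n : ℝ)
      + (∑ k, ∑ l, Ucenter A k l) / ((n : ℝ) ^ 2)) :
    B = Ucenter A := by
  ext i j
  rw [hB i j, Ucenter_row_sum hn A hsymm hdiag i, Ucenter_col_sum hn A hsymm hdiag j]
  have : (∑ k, ∑ l, Ucenter A k l) = 0 := by
    rw [Finset.sum_congr rfl fun k _ => Ucenter_row_sum hn A hsymm hdiag k]
    simp
  rw [this]
  simp
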